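/- Suppose L₀ is a sequential contraction of L. Then the dimensions of the terms of the derived series do not increase: for every l : ℕ, finrank ℝ (LieAlgebra.derivedSeries ℝ L₀ l : Submodule ℝ L₀) ≤ finrank ℝ (LieAlgebra.derivedSeries ℝ L l : Submodule ℝ L). -/

import Mathlib

open Filter Module

section Aux

variable {E : Type*} [AddCommGroup E] [Module ℝ E]
    [TopologicalSpace E] [IsTopologicalAddGroup E] [ContinuousSMul ℝ E] [T2Space E]
    [Module.Finite ℝ E]

set_option linter.unusedSectionVars false in
lemma contraction_bilin_expand {ι : Type*} [Fintype ι] (bb : Basis ι ℝ E)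
    (B : E →ₗ[ℝ] E →ₗ[ℝ] E) (x y : E) :
    B x y = ∑ i, ∑ j, (bb.repr x i * bb.repr y j) • B (bb i) (bb j) := by
  conv_lhs => rw [← bb.sum_repr x, ← bb.sum_repr y]
  simp only [map_sum, LinearMap.sum_apply, map_smul, LinearMap.smul_apply, Finset.smul_sum,
    smul_smul]
  rw [Finset.sum_comm]
  refine Finset.sum_congr rfl fun i _ => Finset.sum_congr rfl fun j _ => ?_
  ring_nf

lemma contraction_tendsto_bilin (B : ℕ → (E →ₗ[ℝ] E →ₗ[ℝ] E)) (Br : E →ₗ[ℝ] E →ₗ[ℝ] E)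
    (hB : ∀ x y, Tendsto (fun p => B p x y) atTop (nhds (Br x y)))
    {a b : E} {ap bp : ℕ → E} (ha : Tendsto ap atTop (nhds a))
    (hb : Tendsto bp atTop (nhds b)) :
    Tendsto (fun p => B p (ap p) (bp p)) atTop (nhds (Br a b)) := by
  let bb := finBasis ℝ E
  have key : (fun p => B p (ap p) (bp p)) = fun p =>
      ∑ i, ∑ j, (bb.repr (ap p) i * bb.repr (bp p) j) • B p (bb i) (bb j) := by
    funext p; exact contraction_bilin_expand bb (B p) _ _
  rw [key, contraction_bilin_expand bb Br a b]
  refine tendsto_finset_sum _ fun i _ => tendsto_finset_sum _ fun j _ => ?_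
  have hc : ∀ (cp : ℕ → E) (c : E) (k), Tendsto cp atTop (nhds c) →
      Tendsto (fun p => bb.repr (cp p) k) atTop (nhds (bb.repr c k)) := by
    intro cp c k hcp
    have hcont : Continuous (bb.coord k) := (bb.coord k).continuous_of_finiteDimensional
    simpa [Basis.coord_apply, Function.comp_def] using ((hcont.tendsto c).comp hcp)
  exact ((hc ap a i ha).mul (hc bp b j hb)).smul (hB (bb i) (bb j))

end Aux

/-- `L₀` is a sequential contraction of the real Lie algebra `L`: there is a sequence of
real-linear equivalences `T p : L ≃ₗ[ℝ] L₀` such that the transported brackets converge to the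
bracket of `L₀`. -/
def IsSequentialContraction (L L₀ : Type*) [LieRing L] [LieAlgebra ℝ L]
    [LieRing L₀] [LieAlgebra ℝ L₀] [TopologicalSpace L₀] : Prop :=
  ∃ T : ℕ → (L ≃ₗ[ℝ] L₀), ∀ x y : L₀,
    Tendsto (fun p => T p ⁅(T p).symm x, (T p).symm y⁆) atTop (nhds ⁅x, y⁆)

/-- Under a sequential contraction, the dimensions of the terms of the derived series do not
increase. -/
theorem derivedSeries_finrank_le_of_contraction {L L₀ : Type*} [LieRing L] [LieAlgebra ℝ L] [LieRing L₀] [LieAlgebra ℝ L₀]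
    [Module.Finite ℝ L] [Module.Finite ℝ L₀]
    [TopologicalSpace L₀] [IsTopologicalAddGroup L₀] [ContinuousSMul ℝ L₀] [T2Space L₀]
    (h : IsSequentialContraction L L₀) :
    ∀ l : ℕ,
      finrank ℝ (LieAlgebra.derivedSeries ℝ L₀ l : Submodule ℝ L₀) ≤
        finrank ℝ (LieAlgebra.derivedSeries ℝ L l : Submodule ℝ L) := by
  obtain ⟨T, hT⟩ := h
  -- the transported brackets as bilinear maps
  let B : ℕ → (L₀ →ₗ[ℝ] L₀ →ₗ[ℝ] L₀) := fun p =>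
    LinearMap.mk₂ ℝ (fun x y => T p ⁅(T p).symm x, (T p).symm y⁆)
      (fun x x' y => by simp [add_lie])
      (fun c x y => by simp [smul_lie])
      (fun x y y' => by simp [lie_add])
      (fun c x y => by simp [lie_smul])
  let Br : L₀ →ₗ[ℝ] L₀ →ₗ[ℝ] L₀ :=
    LinearMap.mk₂ ℝ (fun x y => ⁅x, y⁆) add_lie smul_lie lie_add lie_smul
  have hB : ∀ x y : L₀, Tendsto (fun p => B p x y) atTop (nhds (Br x y)) := fun x y => hT x y
  -- every element of the derived series of `L₀` is approximated by elements of the image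
  -- of the derived series of `L`
  have approx : ∀ l : ℕ, ∀ v ∈ (LieAlgebra.derivedSeries ℝ L₀ l : Submodule ℝ L₀),
      ∃ w : ℕ → L₀,
        (∀ p, w p ∈ (LieAlgebra.derivedSeries ℝ L l : Submodule ℝ L).map
            ((T p : L →ₗ[ℝ] L₀))) ∧ Tendsto w atTop (nhds v) := by
    intro l
    induction l with
    | zero =>
      intro v _
      refine ⟨fun _ => v, fun p => ⟨(T p).symm v, ?_, by simp⟩, tendsto_const_nhds⟩
      simp [LieAlgebra.derivedSeries_def]
    | succ l ih =>
      -- the set of approximable vectors is a submodule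
      set C : Submodule ℝ L₀ :=
        { carrier := { v | ∃ w : ℕ → L₀,
            (∀ p, w p ∈ (LieAlgebra.derivedSeries ℝ L (l + 1) : Submodule ℝ L).map
              ((T p : L →ₗ[ℝ] L₀))) ∧ Tendsto w atTop (nhds v) }
          add_mem' := by
            rintro a b ⟨wa, hwa, hwa'⟩ ⟨wb, hwb, hwb'⟩
            exact ⟨fun p => wa p + wb p, fun p => Submodule.add_mem _ (hwa p) (hwb p),
              hwa'.add hwb'⟩
          zero_mem' := ⟨fun _ => 0, fun p => Submodule.zero_mem _, tendsto_const_nhds⟩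
          smul_mem' := by
            rintro c a ⟨wa, hwa, hwa'⟩
            exact ⟨fun p => c • wa p, fun p => Submodule.smul_mem _ _ (hwa p),
              hwa'.const_smul c⟩ } with hC
      intro v hv
      suffices hle : (LieAlgebra.derivedSeries ℝ L₀ (l + 1) : Submodule ℝ L₀) ≤ C from hle hv
      have hspan : (LieAlgebra.derivedSeries ℝ L₀ (l + 1) : Submodule ℝ L₀) =
          Submodule.span ℝ { m | ∃ x ∈ LieAlgebra.derivedSeries ℝ L₀ l,
            ∃ n ∈ LieAlgebra.derivedSeries ℝ L₀ l, ⁅x, n⁆ = m } := by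
        rw [LieAlgebra.derivedSeries_def, LieAlgebra.derivedSeriesOfIdeal_succ,
          ← LieAlgebra.derivedSeries_def]
        exact LieSubmodule.lieIdeal_oper_eq_linear_span' ..
      rw [hspan]
      rw [Submodule.span_le]
      rintro _ ⟨x, hx, y, hy, rfl⟩
      obtain ⟨wx, hwx, hwx'⟩ := ih x hx
      obtain ⟨wy, hwy, hwy'⟩ := ih y hy
      refine ⟨fun p => B p (wx p) (wy p), fun p => ?_, ?_⟩
      · obtain ⟨zx, hzx, hzx'⟩ := hwx p
        obtain ⟨zy, hzy, hzy'⟩ := hwy p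
        refine ⟨⁅zx, zy⁆, ?_, ?_⟩
        · have : ⁅zx, zy⁆ ∈ LieAlgebra.derivedSeries ℝ L (l + 1) := by
            rw [LieAlgebra.derivedSeries_def, LieAlgebra.derivedSeriesOfIdeal_succ,
              ← LieAlgebra.derivedSeries_def]
            exact LieSubmodule.lie_mem_lie hzx hzy
          exact this
        · simp only [B, LinearMap.mk₂_apply, LinearEquiv.coe_coe]
          rw [← hzx', ← hzy']
          simp
      · exact contraction_tendsto_bilin B Br hB hwx' hwy'
  -- now the dimension count
  intro l
  by_contra hlt
  push_neg at hlt
  set D₀ : Submodule ℝ L₀ := (LieAlgebra.derivedSeries ℝ L₀ l : Submodule ℝ L₀) with hD₀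
  set d : ℕ := finrank ℝ (LieAlgebra.derivedSeries ℝ L l : Submodule ℝ L) with hd
  let sb := finBasis ℝ D₀
  let v : Fin (finrank ℝ D₀) → L₀ := fun i => (sb i : L₀)
  have hv : LinearIndependent ℝ v :=
    sb.linearIndependent.map' D₀.subtype (Submodule.ker_subtype _)
  choose w hw hw' using fun i => approx l (v i) (sb i).2
  -- transfer to a normed space to use openness of linear independence
  let e : L₀ ≃L[ℝ] (Fin (finrank ℝ L₀) → ℝ) :=
    (finBasis ℝ L₀).equivFun.toContinuousLinearEquiv
  have hev : LinearIndependent ℝ (fun i => e (v i)) := by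
    have := hv.map' (e.toLinearEquiv : L₀ →ₗ[ℝ] (Fin (finrank ℝ L₀) → ℝ))
      (LinearMap.ker_eq_bot_of_injective e.toLinearEquiv.injective)
    exact this
  have htend : Tendsto (fun p => fun i => e (w i p)) atTop (nhds (fun i => e (v i))) := by
    rw [tendsto_pi_nhds]
    exact fun i => (e.continuous.tendsto _).comp (hw' i)
  have hopen : IsOpen { f : Fin (finrank ℝ D₀) → (Fin (finrank ℝ L₀) → ℝ) |
      LinearIndependent ℝ f } := isOpen_setOf_linearIndependent
  have hevent : ∀ᶠ p in atTop, LinearIndependent ℝ (fun i => e (w i p)) :=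
    htend (hopen.mem_nhds hev)
  obtain ⟨p, hp⟩ := hevent.exists
  have hwp : LinearIndependent ℝ (fun i => w i p) := by
    have : (fun i => e (w i p)) = (e.toLinearEquiv : L₀ →ₗ[ℝ] _) ∘ (fun i => w i p) := rfl
    rw [this] at hp
    exact LinearIndependent.of_comp _ hp
  -- the `w i p` live in a subspace of dimension `d < finrank ℝ D₀`
  set S : Submodule ℝ L₀ :=
    (LieAlgebra.derivedSeries ℝ L l : Submodule ℝ L).map ((T p : L →ₗ[ℝ] L₀)) with hS
  have hrS : finrank ℝ S = d := LinearEquiv.finrank_map_eq (T p) _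
  let u : Fin (finrank ℝ D₀) → S := fun i => ⟨w i p, hw i p⟩
  have hu : LinearIndependent ℝ u := by
    have : (fun i => w i p) = S.subtype ∘ u := rfl
    rw [this] at hwp
    exact LinearIndependent.of_comp _ hwp
  have := hu.fintype_card_le_finrank
  simp only [Fintype.card_fin, hrS] at this
  omega
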